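/- Let R > 0 and k, m, n ∈ ℕ₀ with n + 1 − m ≥ 0, and let φ ∈ C^∞([−R,R]). For f ∈ C^∞([−R,R]) define Tf(x) = x^{−m} ∫₀^x y^n φ(y) f(y) dy for x ∈ [−R,R] ∖ {0}. Then: (1) Tf extends to a function in C^∞([−R,R]) for every f ∈ C^∞([−R,R]); and (2) there is a constant C > 0, depending only on R, k, m, n, φ, such that ‖Tf‖_{H^k(𝔹_R)} ≤ C ‖f‖_{H^k(𝔹_R)} for all f ∈ C^∞([−R,R]). -/

import Mathlib

open Real MeasureTheory intervalIntegral

/-- The one-dimensional Sobolev norm on the interval `(−R,R)`. -/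
noncomputable def sob1 (R : ℝ) (m : ℕ) (f : ℝ → ℝ) : ℝ :=
  ∑ j ∈ Finset.range (m + 1),
    Real.sqrt (∫ x in Set.Ioo (-R) R, (iteratedDeriv j f x) ^ 2)

/-- The integral operator `Tf(x) = x^{−m} ∫₀^x y^n φ(y) f(y) dy`. -/
noncomputable def Tint (m n : ℕ) (φ f : ℝ → ℝ) : ℝ → ℝ :=
  fun x => (∫ y in (0:ℝ)..x, y ^ n * φ y * f y) / x ^ m

section Aux

open Set Metric
open scoped ContDiff

noncomputable def Aop (n : ℕ) (u : ℝ → ℝ) : ℝ → ℝ :=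
  fun x => ∫ t in (0:ℝ)..1, t ^ n * u (t * x)

noncomputable def Bop (v : ℝ → ℝ) : ℝ → ℝ :=
  fun x => ∫ t in (0:ℝ)..1, |v (t * x)|

lemma one_le_infty' : (1 : WithTop ℕ∞) ≤ ∞ := by exact_mod_cast (le_top : (1:ℕ∞) ≤ ⊤)


lemma Aop_continuous (n : ℕ) {u : ℝ → ℝ} (hu : Continuous u) : Continuous (Aop n u) := by
  exact intervalIntegral.continuous_parametric_intervalIntegral_of_continuous'
    (f := fun x t => t ^ n * u (t * x))
    ((continuous_snd.pow n).mul (hu.comp (continuous_snd.mul continuous_fst))) 0 1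

lemma Aop_hasDerivAt (n : ℕ) {u : ℝ → ℝ} (hu : ContDiff ℝ (⊤ : ℕ∞) u) (x₀ : ℝ) :
    HasDerivAt (Aop n u) (Aop (n + 1) (deriv u) x₀) x₀ := by
  have hu' : Continuous (deriv u) := hu.continuous_deriv one_le_infty'
  have huc : Continuous u := hu.continuous
  obtain ⟨C, hC⟩ := (isCompact_Icc (a := -(|x₀| + 1)) (b := |x₀| + 1)).exists_bound_of_continuousOn
    hu'.continuousOn
  have key := intervalIntegral.hasDerivAt_integral_of_dominated_loc_of_deriv_le
    (F := fun x t => t ^ n * u (t * x)) (F' := fun x t => t ^ (n + 1) * deriv u (t * x))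
    (a := 0) (b := 1) (μ := volume) (bound := fun _ => |C|) (x₀ := x₀) (Metric.ball_mem_nhds x₀ one_pos)
    ?_ ?_ ?_ ?_ ?_ ?_
  · exact key.2
  · filter_upwards with x
    exact ((continuous_pow n).mul (huc.comp (continuous_id.mul continuous_const))).aestronglyMeasurable
  · exact ((continuous_pow n).mul (huc.comp (continuous_id.mul continuous_const))).intervalIntegrable 0 1
  · exact ((continuous_pow (n+1)).mul (hu'.comp (continuous_id.mul continuous_const))).aestronglyMeasurable
  · filter_upwards with t ht x hx
    have ht' : t ∈ Set.Ioc (0:ℝ) 1 := by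
      simpa [Set.uIoc_of_le (zero_le_one : (0:ℝ) ≤ 1)] using ht
    have hx1 : |x| ≤ |x₀| + 1 := by
      have h := abs_sub_abs_le_abs_sub x x₀
      have h2 : |x - x₀| < 1 := mem_ball_iff_norm.mp hx
      linarith
    have htx : t * x ∈ Set.Icc (-(|x₀| + 1)) (|x₀| + 1) := by
      have habs : |t * x| ≤ |x₀| + 1 := by
        rw [abs_mul]
        calc |t| * |x| ≤ 1 * (|x₀| + 1) := by
              apply mul_le_mul _ hx1 (abs_nonneg x) zero_le_one
              rw [abs_of_pos ht'.1]; exact ht'.2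
        _ = |x₀| + 1 := one_mul _
      exact abs_le.mp habs |>.imp (fun h => by linarith) id |> fun h => ⟨h.1, h.2⟩
    have h1 : ‖t ^ (n + 1) * deriv u (t * x)‖ = |t| ^ (n + 1) * |deriv u (t * x)| := by
      rw [Real.norm_eq_abs, abs_mul, abs_pow]
    rw [h1]
    calc |t| ^ (n + 1) * |deriv u (t * x)| ≤ 1 * |C| := by
          apply mul_le_mul _ _ (abs_nonneg _) zero_le_one
          · apply pow_le_one₀ (abs_nonneg t)
            rw [abs_of_pos ht'.1]; exact ht'.2
          · exact (hC _ htx).trans (le_abs_self C)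
    _ = |C| := one_mul _
  · exact intervalIntegrable_const
  · filter_upwards with t ht x hx
    have h3 : HasDerivAt (fun x => u (t * x)) (deriv u (t * x) * t) x := by
      have h1 : HasDerivAt u (deriv u (t * x)) (t * x) :=
        (hu.differentiable (by simp) (t * x)).hasDerivAt
      have h2 : HasDerivAt (fun x : ℝ => t * x) t x := by
        simpa using (hasDerivAt_id x).const_mul t
      exact h1.comp x h2
    have h4 := h3.const_mul (t ^ n)
    refine h4.congr_deriv ?_
    ring

lemma Aop_deriv (n : ℕ) {u : ℝ → ℝ} (hu : ContDiff ℝ (⊤ : ℕ∞) u) :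
    deriv (Aop n u) = Aop (n + 1) (deriv u) :=
  funext fun x => (Aop_hasDerivAt n hu x).deriv

lemma ContDiff.deriv_top {u : ℝ → ℝ} (hu : ContDiff ℝ (⊤ : ℕ∞) u) :
    ContDiff ℝ (⊤ : ℕ∞) (deriv u) := (contDiff_infty_iff_deriv.mp hu).2

lemma Aop_contDiff (n : ℕ) {u : ℝ → ℝ} (hu : ContDiff ℝ (⊤ : ℕ∞) u) :
    ContDiff ℝ (⊤ : ℕ∞) (Aop n u) := by
  have H : ∀ N : ℕ, ∀ n : ℕ, ∀ u : ℝ → ℝ, ContDiff ℝ (⊤ : ℕ∞) u →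
      ContDiff ℝ N (Aop n u) := by
    intro N
    induction N with
    | zero =>
      intro n u hu
      simpa [contDiff_zero] using Aop_continuous n hu.continuous
    | succ N ih =>
      intro n u hu
      have hcast : ((N + 1 : ℕ) : WithTop ℕ∞) = (N : WithTop ℕ∞) + 1 := by push_cast; ring
      rw [hcast, contDiff_succ_iff_deriv]
      refine ⟨fun x => (Aop_hasDerivAt n hu x).differentiableAt, by simp, ?_⟩
      rw [Aop_deriv n hu]
      exact ih (n + 1) (deriv u) hu.deriv_top
  exact contDiff_infty.mpr fun N => H N n u hu

lemma Aop_iteratedDeriv (j n : ℕ) {u : ℝ → ℝ} (hu : ContDiff ℝ (⊤ : ℕ∞) u) :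
    iteratedDeriv j (Aop n u) = Aop (n + j) (iteratedDeriv j u) := by
  induction j generalizing n u with
  | zero => simp [iteratedDeriv_zero]
  | succ j ih =>
    rw [iteratedDeriv_succ', Aop_deriv n hu, ih (n+1) hu.deriv_top,
      ← iteratedDeriv_succ', show n + 1 + j = n + (j+1) by omega]

lemma Aop_cov (n : ℕ) (u : ℝ → ℝ) {x : ℝ} (hx : x ≠ 0) :
    Aop n u x = (x ^ (n+1))⁻¹ * ∫ y in (0:ℝ)..x, y ^ n * u y := by
  have h1 : Aop n u x = ∫ t in (0:ℝ)..1, (fun y => (y / x) ^ n * u y) (t * x) := by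
    unfold Aop
    refine intervalIntegral.integral_congr fun t _ => ?_
    simp only
    rw [mul_div_assoc, div_self hx, mul_one]
  have hcv := intervalIntegral.integral_comp_mul_right (a := (0:ℝ)) (b := 1)
    (f := fun y => (y / x) ^ n * u y) hx
  rw [h1, hcv]
  simp only [zero_mul, one_mul, smul_eq_mul]
  have h2 : ∫ y in (0:ℝ)..x, (y / x) ^ n * u y
      = (x ^ n)⁻¹ * ∫ y in (0:ℝ)..x, y ^ n * u y := by
    rw [← intervalIntegral.integral_const_mul]
    refine intervalIntegral.integral_congr fun y _ => ?_
    rw [div_pow]; ring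
  rw [h2, pow_succ, mul_inv]
  ring
lemma g_eq_Tint (m n : ℕ) (hmn : m ≤ n + 1) (φ f : ℝ → ℝ) {x : ℝ} (hx : x ≠ 0) :
    x ^ (n + 1 - m) * Aop n (fun y => φ y * f y) x = Tint m n φ f x := by
  rw [Aop_cov n _ hx]
  unfold Tint
  have h1 : ∫ y in (0:ℝ)..x, y ^ n * (φ y * f y) = ∫ y in (0:ℝ)..x, y ^ n * φ y * f y :=
    intervalIntegral.integral_congr fun y _ => by ring
  rw [h1]
  have h2 : x ^ (n + 1 - m) * x ^ m = x ^ (n + 1) := by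
    rw [← pow_add]; congr 1; omega
  have hxm : (x : ℝ) ^ m ≠ 0 := pow_ne_zero _ hx
  have hxn : (x : ℝ) ^ (n+1) ≠ 0 := pow_ne_zero _ hx
  field_simp
  rw [mul_comm (x ^ (n+1-m)) _, mul_assoc, h2, mul_comm]

lemma Bop_continuous {v : ℝ → ℝ} (hv : Continuous v) : Continuous (Bop v) := by
  exact intervalIntegral.continuous_parametric_intervalIntegral_of_continuous'
    (f := fun x t => |v (t * x)|)
    ((hv.comp (continuous_snd.mul continuous_fst)).abs) 0 1

lemma Bop_nonneg (v : ℝ → ℝ) (x : ℝ) : 0 ≤ Bop v x :=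
  intervalIntegral.integral_nonneg zero_le_one (fun t _ => abs_nonneg _)

lemma Bop_eq_Ioc (v : ℝ → ℝ) (x : ℝ) :
    Bop v x = ∫ t in Ioc (0:ℝ) 1, |v (t * x)| :=
  intervalIntegral.integral_of_le zero_le_one

lemma integral_Ioc_inv_sqrt : ∫ t in Ioc (0:ℝ) 1, t ^ (-(1/2) : ℝ) = 2 := by
  rw [← intervalIntegral.integral_of_le zero_le_one]
  rw [integral_rpow (Or.inl (by norm_num))]
  norm_num

/-- Cauchy-Schwarz bound for `Bop`. -/
lemma Bop_sq_le {v : ℝ → ℝ} (hv : Continuous v) (x : ℝ) :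
    (Bop v x) ^ 2 ≤ 2 * ∫ t in Ioc (0:ℝ) 1, Real.sqrt t * (v (t * x)) ^ 2 := by
  set μ := volume.restrict (Ioc (0:ℝ) 1) with hμ
  set s : ℝ → ℝ := fun t => Real.sqrt (Real.sqrt t) with hs
  have hs_cont : Continuous s := Real.continuous_sqrt.comp Real.continuous_sqrt
  have hs_nonneg : ∀ t, 0 ≤ s t := fun t => Real.sqrt_nonneg _
  set F : ℝ → ℝ := fun t => s t * |v (t * x)| with hF
  set G : ℝ → ℝ := fun t => (s t)⁻¹ with hG
  have hF_cont : Continuous F := hs_cont.mul ((hv.comp (continuous_id.mul continuous_const)).abs)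
  have hF_nonneg : ∀ t, 0 ≤ F t := fun t => mul_nonneg (hs_nonneg t) (abs_nonneg _)
  have hG_nonneg : ∀ t, 0 ≤ G t := fun t => inv_nonneg.mpr (hs_nonneg t)
  -- s is positive on Ioc 0 1
  have hs_pos : ∀ t ∈ Ioc (0:ℝ) 1, 0 < s t := fun t ht =>
    Real.sqrt_pos.mpr (Real.sqrt_pos.mpr ht.1)
  have hs_sq : ∀ t, 0 ≤ t → s t ^ 2 = Real.sqrt t := fun t ht => Real.sq_sqrt (Real.sqrt_nonneg t)
  -- identification of the three整 integrals
  have h1 : Bop v x = ∫ t, F t * G t ∂μ := by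
    rw [Bop_eq_Ioc]
    refine (setIntegral_congr_fun measurableSet_Ioc fun t ht => ?_).symm
    have := (hs_pos t ht).ne'
    show s t * |v (t * x)| * (s t)⁻¹ = _
    field_simp [hF, hG]
  have hF2 : ∫ t, F t ^ (2:ℝ) ∂μ = ∫ t in Ioc (0:ℝ) 1, Real.sqrt t * (v (t * x)) ^ 2 := by
    refine setIntegral_congr_fun measurableSet_Ioc fun t ht => ?_
    have h2 : F t ^ (2:ℝ) = F t ^ (2:ℕ) := by
      rw [← Real.rpow_natCast (F t) 2]; norm_num
    rw [h2, hF]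
    simp only [mul_pow, sq_abs]
    rw [hs_sq t ht.1.le]
  have hGpt : ∀ t ∈ Ioc (0:ℝ) 1, G t ^ (2:ℝ) = t ^ (-(1/2):ℝ) := by
    intro t ht
    have h2 : G t ^ (2:ℝ) = G t ^ (2:ℕ) := by
      rw [← Real.rpow_natCast (G t) 2]; norm_num
    rw [h2, hG]
    simp only [inv_pow]
    rw [hs_sq t ht.1.le, Real.rpow_neg ht.1.le, ← Real.sqrt_eq_rpow]
  have hG2 : ∫ t, G t ^ (2:ℝ) ∂μ = 2 :=
    (setIntegral_congr_fun measurableSet_Ioc hGpt).trans integral_Ioc_inv_sqrt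
  -- Memℒp facts
  have h2e : ENNReal.ofReal (2:ℝ) = 2 := by norm_num
  have hFmem : MemLp F (ENNReal.ofReal (2:ℝ)) μ := by
    rw [h2e]
    refine (memLp_two_iff_integrable_sq hF_cont.aestronglyMeasurable).mpr ?_
    exact (hF_cont.pow 2).integrableOn_Ioc
  have hGmem : MemLp G (ENNReal.ofReal (2:ℝ)) μ := by
    rw [h2e]
    refine (memLp_two_iff_integrable_sq
      (hs_cont.measurable.inv.aestronglyMeasurable)).mpr ?_
    have hint : Integrable (fun t : ℝ => t ^ (-(1/2):ℝ)) μ := by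
      have h3 := intervalIntegral.intervalIntegrable_rpow' (a := 0) (b := 1)
        (r := -(1/2)) (by norm_num)
      rwa [intervalIntegrable_iff_integrableOn_Ioc_of_le zero_le_one] at h3
    refine hint.congr ?_
    rw [Filter.EventuallyEq, ae_restrict_iff' measurableSet_Ioc]
    filter_upwards with t ht
    have h5 : G t ^ (2:ℕ) = t ^ (-(1/2):ℝ) := by
      rw [hG]
      simp only [inv_pow]
      rw [hs_sq t ht.1.le, Real.rpow_neg ht.1.le, ← Real.sqrt_eq_rpow]
    rw [← h5]
    rfl
  have hpq : Real.HolderConjugate 2 2 := ⟨by norm_num, by norm_num, by norm_num⟩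
  have hH := integral_mul_le_Lp_mul_Lq_of_nonneg hpq
    (Filter.Eventually.of_forall hF_nonneg) (Filter.Eventually.of_forall hG_nonneg) hFmem hGmem
  have hBnn : 0 ≤ ∫ t, F t * G t ∂μ :=
    integral_nonneg fun t => mul_nonneg (hF_nonneg t) (hG_nonneg t)
  have hI2 : 0 ≤ ∫ t, F t ^ (2:ℝ) ∂μ :=
    integral_nonneg fun t => Real.rpow_nonneg (hF_nonneg t) _
  have hG2nn : 0 ≤ ∫ t, G t ^ (2:ℝ) ∂μ := by rw [hG2]; norm_num
  rw [h1]
  calc (∫ t, F t * G t ∂μ) ^ 2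
      ≤ ((∫ t, F t ^ (2:ℝ) ∂μ) ^ (1/2:ℝ) * (∫ t, G t ^ (2:ℝ) ∂μ) ^ (1/2:ℝ)) ^ 2 := by
        apply pow_le_pow_left₀ hBnn hH 2
  _ = (∫ t, F t ^ (2:ℝ) ∂μ) * (∫ t, G t ^ (2:ℝ) ∂μ) := by
        rw [mul_pow,
          ← Real.rpow_natCast ((∫ t, F t ^ (2:ℝ) ∂μ) ^ (1/2:ℝ)) 2,
          ← Real.rpow_natCast ((∫ t, G t ^ (2:ℝ) ∂μ) ^ (1/2:ℝ)) 2,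
          ← Real.rpow_mul hI2, ← Real.rpow_mul hG2nn]
        norm_num
  _ = 2 * ∫ t in Ioc (0:ℝ) 1, Real.sqrt t * (v (t * x)) ^ 2 := by rw [hF2, hG2]; ring

lemma Bop_L2 {R : ℝ} (hR : 0 < R) {v : ℝ → ℝ} (hv : Continuous v) :
    ∫ x in Ioo (-R) R, (Bop v x) ^ 2 ≤ 4 * ∫ x in Ioo (-R) R, (v x) ^ 2 := by
  set I := ∫ x in Ioo (-R) R, (v x) ^ 2 with hI
  have hInn : 0 ≤ I := setIntegral_nonneg measurableSet_Ioo fun x _ => sq_nonneg _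
  set W : ℝ → ℝ → ℝ := fun x t => Real.sqrt t * (v (t * x)) ^ 2 with hW
  have hW_cont : Continuous (Function.uncurry W) := by
    apply Continuous.mul
    · exact Real.continuous_sqrt.comp continuous_snd
    · exact ((hv.comp (continuous_snd.mul continuous_fst)).pow 2)
  have hWint : Integrable (Function.uncurry W)
      ((volume.restrict (Ioo (-R) R)).prod (volume.restrict (Ioc (0:ℝ) 1))) := by
    rw [Measure.prod_restrict, ← Measure.volume_eq_prod]
    refine ((hW_cont.continuousOn.integrableOn_compact
      ((isCompact_Icc (a := -R) (b := R)).prod (isCompact_Icc (a := (0:ℝ)) (b := 1)))).mono_set ?_)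
    exact Set.prod_mono Set.Ioo_subset_Icc_self Set.Ioc_subset_Icc_self
  have hWinner : Integrable (fun x => ∫ t, W x t ∂(volume.restrict (Ioc (0:ℝ) 1)))
      (volume.restrict (Ioo (-R) R)) := hWint.integral_prod_left
  -- step 1 : pointwise Cauchy-Schwarz
  have step1 : ∫ x in Ioo (-R) R, (Bop v x) ^ 2
      ≤ ∫ x in Ioo (-R) R, 2 * ∫ t in Ioc (0:ℝ) 1, W x t := by
    refine integral_mono_of_nonneg (Filter.Eventually.of_forall fun x => sq_nonneg _)
      (hWinner.const_mul 2) (Filter.Eventually.of_forall fun x => ?_)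
    exact Bop_sq_le hv x
  -- step 2 : Fubini
  have step2 : ∫ x in Ioo (-R) R, (2:ℝ) * ∫ t in Ioc (0:ℝ) 1, W x t
      = 2 * ∫ t in Ioc (0:ℝ) 1, ∫ x in Ioo (-R) R, W x t := by
    rw [MeasureTheory.integral_const_mul, integral_integral_swap hWint]
  -- step 3 : per-t scaling bound
  have step3 : ∫ t in Ioc (0:ℝ) 1, ∫ x in Ioo (-R) R, W x t
      ≤ ∫ t in Ioc (0:ℝ) 1, t ^ (-(1/2):ℝ) * I := by
    have hrpow_int : Integrable (fun t : ℝ => t ^ (-(1/2):ℝ))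
        (volume.restrict (Ioc (0:ℝ) 1)) := by
      have h3 := intervalIntegral.intervalIntegrable_rpow' (a := 0) (b := 1)
        (r := -(1/2)) (by norm_num)
      rwa [intervalIntegrable_iff_integrableOn_Ioc_of_le zero_le_one] at h3
    refine integral_mono_of_nonneg
      (Filter.Eventually.of_forall fun t =>
        setIntegral_nonneg measurableSet_Ioo fun x _ =>
          mul_nonneg (Real.sqrt_nonneg _) (sq_nonneg _))
      (hrpow_int.mul_const I) ?_
    rw [Filter.EventuallyLE, ae_restrict_iff' measurableSet_Ioc]
    filter_upwards with t ht
    have ht0 : (0:ℝ) < t := ht.1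
    have ht1 : t ≤ 1 := ht.2
    have hsq : Real.sqrt t ≠ 0 := (Real.sqrt_pos.mpr ht0).ne'
    -- compute the inner integral
    have e1 : ∫ x in Ioo (-R) R, W x t = Real.sqrt t * ∫ x in Ioo (-R) R, (v (t * x)) ^ 2 := by
      rw [hW]; exact MeasureTheory.integral_const_mul _ _
    have e2 : ∫ x in Ioo (-R) R, (v (t * x)) ^ 2
        = t⁻¹ • ∫ y in t * (-R)..t * R, (v y) ^ 2 := by
      rw [← integral_Ioc_eq_integral_Ioo,
        ← intervalIntegral.integral_of_le (by linarith : -R ≤ R)]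
      exact intervalIntegral.integral_comp_mul_left (fun y => (v y) ^ 2) ht0.ne'
    have e3 : ∫ y in t * (-R)..t * R, (v y) ^ 2 ≤ ∫ y in (-R)..R, (v y) ^ 2 := by
      have h5 : t * R ≤ R := by nlinarith
      refine intervalIntegral.integral_mono_interval (by linarith) (by nlinarith) h5
        (Filter.Eventually.of_forall fun y => sq_nonneg _) ((hv.pow 2).intervalIntegrable _ _)
    have e4 : ∫ y in (-R)..R, (v y) ^ 2 = I := by
      rw [hI, intervalIntegral.integral_of_le (by linarith : -R ≤ R),
        integral_Ioc_eq_integral_Ioo]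
    have e5 : Real.sqrt t * t⁻¹ = t ^ (-(1/2):ℝ) := by
      rw [Real.rpow_neg ht0.le, ← Real.sqrt_eq_rpow]
      rw [← Real.mul_self_sqrt ht0.le]
      field_simp
      rw [Real.sqrt_sq (Real.sqrt_nonneg _)]
    have hJnn : 0 ≤ ∫ y in t * (-R)..t * R, (v y) ^ 2 := by
      have h5 : t * R ≤ R := by nlinarith
      apply intervalIntegral.integral_nonneg (by nlinarith) (fun y _ => sq_nonneg _)
    calc ∫ x in Ioo (-R) R, W x t
        = Real.sqrt t * t⁻¹ * ∫ y in t * (-R)..t * R, (v y) ^ 2 := by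
          rw [e1, e2]; simp [smul_eq_mul]; ring
      _ ≤ Real.sqrt t * t⁻¹ * I := by
          apply mul_le_mul_of_nonneg_left (e3.trans_eq e4)
          positivity
      _ = t ^ (-(1/2):ℝ) * I := by rw [e5]
  have step4 : ∫ t in Ioc (0:ℝ) 1, t ^ (-(1/2):ℝ) * I = 2 * I := by
    rw [MeasureTheory.integral_mul_const, integral_Ioc_inv_sqrt]
  calc ∫ x in Ioo (-R) R, (Bop v x) ^ 2
      ≤ ∫ x in Ioo (-R) R, 2 * ∫ t in Ioc (0:ℝ) 1, W x t := step1
    _ = 2 * ∫ t in Ioc (0:ℝ) 1, ∫ x in Ioo (-R) R, W x t := step2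
    _ ≤ 2 * (2 * I) := by
        have := step3.trans_eq step4
        linarith
    _ = 4 * I := by ring

lemma contDiff_top_iteratedDeriv {u : ℝ → ℝ} (hu : ContDiff ℝ (⊤ : ℕ∞) u) (c : ℕ) :
    ContDiff ℝ (⊤ : ℕ∞) (iteratedDeriv c u) := by
  rw [iteratedDeriv_eq_iterate]
  exact hu.iterate_deriv c

lemma abs_iteratedDeriv_mul_le {a b : ℝ → ℝ} (ha : ContDiff ℝ (⊤ : ℕ∞) a)
    (hb : ContDiff ℝ (⊤ : ℕ∞) b) (j : ℕ) (x : ℝ) :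
    |iteratedDeriv j (fun y => a y * b y) x| ≤ ∑ i ∈ Finset.range (j + 1),
      (j.choose i : ℝ) * |iteratedDeriv i a x| * |iteratedDeriv (j - i) b x| := by
  have h := norm_iteratedFDeriv_mul_le ha hb x (n := j)
    (by exact_mod_cast (le_top : (j : ℕ∞) ≤ ⊤))
  simpa only [norm_iteratedFDeriv_eq_norm_iteratedDeriv, Real.norm_eq_abs] using h

lemma Aop_abs_le (a : ℕ) {w : ℝ → ℝ} (hw : Continuous w) (x : ℝ) :
    |Aop a w x| ≤ Bop w x := by
  refine (intervalIntegral.abs_integral_le_integral_abs zero_le_one).trans ?_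
  refine intervalIntegral.integral_mono_on zero_le_one ?_ ?_ fun t ht => ?_
  · exact ((continuous_pow a).mul
      (hw.comp (continuous_id.mul continuous_const))).abs.intervalIntegrable 0 1
  · exact (hw.comp (continuous_id.mul continuous_const)).abs.intervalIntegrable 0 1
  · rw [abs_mul, abs_pow]
    have h1 : |t| ≤ 1 := abs_le.mpr ⟨by linarith [ht.1], ht.2⟩
    calc |t| ^ a * |w (t * x)| ≤ 1 * |w (t * x)| := by
          apply mul_le_mul_of_nonneg_right (pow_le_one₀ (abs_nonneg t) h1) (abs_nonneg _)
    _ = |w (t * x)| := one_mul _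

lemma exists_unif_bound (R : ℝ) (k : ℕ) {u : ℝ → ℝ} (hu : ContDiff ℝ (⊤ : ℕ∞) u) :
    ∃ D : ℝ, 0 ≤ D ∧ ∀ i ≤ k, ∀ x ∈ Icc (-R) R, ‖iteratedFDeriv ℝ i u x‖ ≤ D := by
  have h : ∀ i : ℕ, ∃ Ci : ℝ, ∀ x ∈ Icc (-R) R, ‖iteratedFDeriv ℝ i u x‖ ≤ Ci := fun i =>
    isCompact_Icc.exists_bound_of_continuousOn
      ((hu.continuous_iteratedFDeriv (by exact_mod_cast (le_top : (i:ℕ∞) ≤ ⊤))).continuousOn)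
  choose C hC using h
  refine ⟨∑ i ∈ Finset.range (k + 1), |C i|,
    Finset.sum_nonneg fun i _ => abs_nonneg _, fun i hi x hx => ?_⟩
  calc ‖iteratedFDeriv ℝ i u x‖ ≤ C i := hC i x hx
    _ ≤ |C i| := le_abs_self _
    _ ≤ ∑ i ∈ Finset.range (k + 1), |C i| :=
        Finset.single_le_sum (fun j _ => abs_nonneg (C j)) (Finset.mem_range.mpr (by omega))

lemma choose_le_two_pow_k {b i k : ℕ} (hb : b ≤ k) : (b.choose i : ℝ) ≤ 2 ^ k := by
  have h1 : b.choose i ≤ 2 ^ b := by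
    rcases le_or_gt i b with h | h
    · calc b.choose i ≤ ∑ j ∈ Finset.range (b + 1), b.choose j :=
            Finset.single_le_sum (fun j _ => Nat.zero_le _) (Finset.mem_range.mpr (by omega))
      _ = 2 ^ b := Nat.sum_range_choose b
    · rw [Nat.choose_eq_zero_of_lt h]; positivity
  calc (b.choose i : ℝ) ≤ (2:ℝ) ^ b := by exact_mod_cast h1
    _ ≤ 2 ^ k := by apply pow_le_pow_right₀ one_le_two hb

lemma gbound (R : ℝ) (hR : 0 < R) (k m n : ℕ) (φ : ℝ → ℝ) (hφ : ContDiff ℝ (⊤ : ℕ∞) φ) :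
    ∃ D > (0:ℝ), ∀ f : ℝ → ℝ, ContDiff ℝ (⊤ : ℕ∞) f → ∀ j ≤ k, ∀ x ∈ Icc (-R) R,
      |iteratedDeriv j (fun z => z ^ (n + 1 - m) * Aop n (fun y => φ y * f y) z) x|
        ≤ D * ∑ c ∈ Finset.range (k + 1), Bop (iteratedDeriv c f) x := by
  have hP : ContDiff ℝ (⊤ : ℕ∞) (fun z : ℝ => z ^ (n + 1 - m)) := contDiff_id.pow _
  obtain ⟨DP, hDP0, hDP⟩ := exists_unif_bound R k hP
  obtain ⟨Dφ, hDφ0, hDφ⟩ := exists_unif_bound R k hφ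
  refine ⟨(k + 1) * 2 ^ k * 2 ^ k * (DP + 1) * (Dφ + 1), by positivity, ?_⟩
  intro f hf j hj x hx
  have hu : ContDiff ℝ (⊤ : ℕ∞) (fun y => φ y * f y) := hφ.mul hf
  have hxR : |x| ≤ R := abs_le.mpr ⟨hx.1, hx.2⟩
  -- pointwise bound on iterated derivatives of u = φ * f
  have uB : ∀ b ≤ k, ∀ y ∈ Icc (-R) R, |iteratedDeriv b (fun y => φ y * f y) y|
      ≤ 2 ^ k * (Dφ + 1) * ∑ c ∈ Finset.range (k + 1), |iteratedDeriv c f y| := by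
    intro b hb y hy
    have h1 := abs_iteratedDeriv_mul_le hφ hf b y
    have h2 : ∑ i ∈ Finset.range (b + 1),
        (b.choose i : ℝ) * |iteratedDeriv i φ y| * |iteratedDeriv (b - i) f y|
        ≤ ∑ i ∈ Finset.range (b + 1), 2 ^ k * (Dφ + 1) * |iteratedDeriv (b - i) f y| := by
      refine Finset.sum_le_sum fun i hi => ?_
      have hik : i ≤ k := by
        have := Finset.mem_range.mp hi; omega
      have hφi : |iteratedDeriv i φ y| ≤ Dφ + 1 := by
        have h3 := hDφ i hik y hy
        rw [norm_iteratedFDeriv_eq_norm_iteratedDeriv, Real.norm_eq_abs] at h3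
        linarith
      exact mul_le_mul_of_nonneg_right
        (mul_le_mul (choose_le_two_pow_k hb) hφi (abs_nonneg _) (by positivity)) (abs_nonneg _)
    have h3 : ∑ i ∈ Finset.range (b + 1), |iteratedDeriv (b - i) f y|
        = ∑ i ∈ Finset.range (b + 1), |iteratedDeriv i f y| := by
      have := Finset.sum_range_reflect (fun i => |iteratedDeriv i f y|) (b + 1)
      simpa using this
    have h4 : ∑ i ∈ Finset.range (b + 1), |iteratedDeriv i f y|
        ≤ ∑ c ∈ Finset.range (k + 1), |iteratedDeriv c f y| :=
      Finset.sum_le_sum_of_subset_of_nonneg (Finset.range_subset_range.mpr (by omega))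
        (fun _ _ _ => abs_nonneg _)
    calc |iteratedDeriv b (fun y => φ y * f y) y|
        ≤ ∑ i ∈ Finset.range (b + 1),
          (b.choose i : ℝ) * |iteratedDeriv i φ y| * |iteratedDeriv (b - i) f y| := h1
      _ ≤ ∑ i ∈ Finset.range (b + 1), 2 ^ k * (Dφ + 1) * |iteratedDeriv (b - i) f y| := h2
      _ = 2 ^ k * (Dφ + 1) * ∑ i ∈ Finset.range (b + 1), |iteratedDeriv (b - i) f y| := by
          rw [← Finset.mul_sum]
      _ = 2 ^ k * (Dφ + 1) * ∑ i ∈ Finset.range (b + 1), |iteratedDeriv i f y| := by rw [h3]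
      _ ≤ 2 ^ k * (Dφ + 1) * ∑ c ∈ Finset.range (k + 1), |iteratedDeriv c f y| := by
          apply mul_le_mul_of_nonneg_left h4 (by positivity)
  -- integral version
  have hB : ∀ b ≤ k, Bop (iteratedDeriv b (fun y => φ y * f y)) x
      ≤ 2 ^ k * (Dφ + 1) * ∑ c ∈ Finset.range (k + 1), Bop (iteratedDeriv c f) x := by
    intro b hb
    have hcont : ∀ c : ℕ, Continuous fun t : ℝ => |iteratedDeriv c f (t * x)| := fun c =>
      ((contDiff_top_iteratedDeriv hf c).continuous.comp (continuous_id.mul continuous_const)).abs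
    have hrhs : ∫ t in (0:ℝ)..1,
        2 ^ k * (Dφ + 1) * ∑ c ∈ Finset.range (k + 1), |iteratedDeriv c f (t * x)|
        = 2 ^ k * (Dφ + 1) * ∑ c ∈ Finset.range (k + 1), Bop (iteratedDeriv c f) x := by
      rw [intervalIntegral.integral_const_mul]
      congr 1
      rw [intervalIntegral.integral_finset_sum]
      · rfl
      · exact fun c _ => (hcont c).intervalIntegrable 0 1
    rw [show Bop (iteratedDeriv b (fun y => φ y * f y)) x
        = ∫ t in (0:ℝ)..1, |iteratedDeriv b (fun y => φ y * f y) (t * x)| from rfl, ← hrhs]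
    refine intervalIntegral.integral_mono_on zero_le_one ?_ ?_ fun t ht => ?_
    · exact ((contDiff_top_iteratedDeriv hu b).continuous.comp
        (continuous_id.mul continuous_const)).abs.intervalIntegrable 0 1
    · exact (continuous_const.mul
        (continuous_finset_sum _ fun c _ => hcont c)).intervalIntegrable 0 1
    · have htx : t * x ∈ Icc (-R) R := by
        have : |t * x| ≤ R := by
          rw [abs_mul]
          calc |t| * |x| ≤ 1 * R := by
                apply mul_le_mul _ hxR (abs_nonneg x) zero_le_one
                exact abs_le.mpr ⟨by linarith [ht.1], ht.2⟩
          _ = R := one_mul R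
        exact abs_le.mp this |> fun h => ⟨h.1, h.2⟩
      exact uB b hb (t * x) htx
  -- final Leibniz bound
  have h1 := abs_iteratedDeriv_mul_le hP (Aop_contDiff n hu) j x
  have hSnn : 0 ≤ ∑ c ∈ Finset.range (k + 1), Bop (iteratedDeriv c f) x :=
    Finset.sum_nonneg fun c _ => Bop_nonneg _ _
  have h2 : ∀ i ∈ Finset.range (j + 1),
      (j.choose i : ℝ) * |iteratedDeriv i (fun z : ℝ => z ^ (n + 1 - m)) x|
        * |iteratedDeriv (j - i) (Aop n (fun y => φ y * f y)) x|
      ≤ 2 ^ k * (DP + 1) *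
        (2 ^ k * (Dφ + 1) * ∑ c ∈ Finset.range (k + 1), Bop (iteratedDeriv c f) x) := by
    intro i hi
    have hik : i ≤ k := by have := Finset.mem_range.mp hi; omega
    have hPi : |iteratedDeriv i (fun z : ℝ => z ^ (n + 1 - m)) x| ≤ DP + 1 := by
      have h3 := hDP i hik x hx
      rw [norm_iteratedFDeriv_eq_norm_iteratedDeriv, Real.norm_eq_abs] at h3
      linarith
    have hAi : |iteratedDeriv (j - i) (Aop n (fun y => φ y * f y)) x|
        ≤ 2 ^ k * (Dφ + 1) * ∑ c ∈ Finset.range (k + 1), Bop (iteratedDeriv c f) x := by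
      rw [Aop_iteratedDeriv (j - i) n hu]
      calc |Aop (n + (j - i)) (iteratedDeriv (j - i) (fun y => φ y * f y)) x|
          ≤ Bop (iteratedDeriv (j - i) (fun y => φ y * f y)) x :=
            Aop_abs_le _ (contDiff_top_iteratedDeriv hu _).continuous x
        _ ≤ _ := hB (j - i) (by omega)
    exact mul_le_mul (mul_le_mul (choose_le_two_pow_k hj) hPi (abs_nonneg _) (by positivity))
      hAi (abs_nonneg _) (by positivity)
  have h5 := Finset.sum_le_sum h2
  rw [Finset.sum_const, Finset.card_range, nsmul_eq_mul] at h5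
  push_cast at h5
  have hjk : ((j:ℝ) + 1) ≤ (k:ℝ) + 1 := by exact_mod_cast Nat.add_le_add_right hj 1
  have h6 : ((j:ℝ) + 1) * (2 ^ k * (DP + 1) *
        (2 ^ k * (Dφ + 1) * ∑ c ∈ Finset.range (k + 1), Bop (iteratedDeriv c f) x))
      ≤ ((k:ℝ) + 1) * (2 ^ k * (DP + 1) *
        (2 ^ k * (Dφ + 1) * ∑ c ∈ Finset.range (k + 1), Bop (iteratedDeriv c f) x)) :=
    mul_le_mul_of_nonneg_right hjk (by positivity)
  refine h1.trans (h5.trans (h6.trans (le_of_eq (by ring))))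

lemma sqrt_add_le' (a b : ℝ) (ha : 0 ≤ a) (hb : 0 ≤ b) :
    Real.sqrt (a + b) ≤ Real.sqrt a + Real.sqrt b := by
  rw [show Real.sqrt a + Real.sqrt b = Real.sqrt ((Real.sqrt a + Real.sqrt b) ^ 2) from
    (Real.sqrt_sq (by positivity)).symm]
  apply Real.sqrt_le_sqrt
  nlinarith [Real.sq_sqrt ha, Real.sq_sqrt hb, Real.sqrt_nonneg a, Real.sqrt_nonneg b]

lemma sqrt_sum_le (s : Finset ℕ) (g : ℕ → ℝ) (hg : ∀ i ∈ s, 0 ≤ g i) :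
    Real.sqrt (∑ i ∈ s, g i) ≤ ∑ i ∈ s, Real.sqrt (g i) := by
  have h1 : ∑ i ∈ s, g i ≤ (∑ i ∈ s, Real.sqrt (g i)) ^ 2 := by
    have h2 : ∀ i ∈ s, g i = Real.sqrt (g i) ^ 2 := fun i hi => (Real.sq_sqrt (hg i hi)).symm
    calc ∑ i ∈ s, g i = ∑ i ∈ s, Real.sqrt (g i) ^ 2 := Finset.sum_congr rfl h2
      _ ≤ (∑ i ∈ s, Real.sqrt (g i)) ^ 2 :=
          Finset.sum_sq_le_sq_sum_of_nonneg fun i _ => Real.sqrt_nonneg _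
  calc Real.sqrt (∑ i ∈ s, g i) ≤ Real.sqrt ((∑ i ∈ s, Real.sqrt (g i)) ^ 2) :=
        Real.sqrt_le_sqrt h1
    _ = ∑ i ∈ s, Real.sqrt (g i) :=
        Real.sqrt_sq (Finset.sum_nonneg fun i _ => Real.sqrt_nonneg _)

end Aux
theorem integral_operator_bound (R : ℝ) (hR : 0 < R) (k m n : ℕ)
    (hmn : m ≤ n + 1) (φ : ℝ → ℝ) (hφ : ContDiff ℝ (⊤ : ℕ∞) φ) :
    -- (1) smooth extension across the origin
    (∀ f : ℝ → ℝ, ContDiff ℝ (⊤ : ℕ∞) f →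
      ∃ g : ℝ → ℝ, ContDiff ℝ (⊤ : ℕ∞) g ∧
        ∀ x ∈ Set.Icc (-R) R, x ≠ 0 → g x = Tint m n φ f x) ∧
    -- (2) Sobolev boundedness
    (∃ C > (0 : ℝ), ∀ f : ℝ → ℝ, ContDiff ℝ (⊤ : ℕ∞) f →
      sob1 R k (Tint m n φ f) ≤ C * sob1 R k f) := by
  constructor
  · intro f hf
    refine ⟨fun z => z ^ (n + 1 - m) * Aop n (fun y => φ y * f y) z,
      (contDiff_id.pow _).mul (Aop_contDiff n (hφ.mul hf)), fun x _ hx => ?_⟩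
    exact g_eq_Tint m n hmn φ f hx
  · obtain ⟨D, hD0, hDb⟩ := gbound R hR k m n φ hφ
    set E : ℝ := 4 * (D ^ 2 * ((k : ℝ) + 1)) with hE
    have hE0 : 0 ≤ E := by positivity
    refine ⟨((k : ℝ) + 1) * Real.sqrt E + 1, by positivity, ?_⟩
    intro f hf
    have hgc : ContDiff ℝ (⊤ : ℕ∞) (fun z => z ^ (n + 1 - m) * Aop n (fun y => φ y * f y) z) :=
      (contDiff_id.pow _).mul (Aop_contDiff n (hφ.mul hf))
    have hfc : ∀ c : ℕ, Continuous (iteratedDeriv c f) := fun c =>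
      (contDiff_top_iteratedDeriv hf c).continuous
    set Ic : ℕ → ℝ := fun c => ∫ x in Set.Ioo (-R) R, (iteratedDeriv c f x) ^ 2 with hIc
    have hIc0 : ∀ c ∈ Finset.range (k + 1), 0 ≤ Ic c := fun c _ =>
      setIntegral_nonneg measurableSet_Ioo fun x _ => sq_nonneg _
    have hsob : sob1 R k f = ∑ c ∈ Finset.range (k + 1), Real.sqrt (Ic c) := rfl
    have hsob_nonneg : 0 ≤ sob1 R k f := by
      rw [hsob]; exact Finset.sum_nonneg fun c _ => Real.sqrt_nonneg _
    have key : ∀ j ∈ Finset.range (k + 1),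
        Real.sqrt (∫ x in Set.Ioo (-R) R, (iteratedDeriv j (Tint m n φ f) x) ^ 2)
          ≤ Real.sqrt E * sob1 R k f := by
      intro j hjmem
      have hjk : j ≤ k := by have := Finset.mem_range.mp hjmem; omega
      -- replace Tint by its smooth version
      have hID : ∀ x : ℝ, x ≠ 0 → iteratedDeriv j (Tint m n φ f) x
          = iteratedDeriv j (fun z => z ^ (n + 1 - m) * Aop n (fun y => φ y * f y) z) x := by
        intro x hx
        refine Filter.EventuallyEq.iteratedDeriv_eq j ?_
        refine Filter.eventually_of_mem (isOpen_compl_singleton.mem_nhds hx) fun y hy => ?_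
        exact (g_eq_Tint m n hmn φ f hy).symm
      have hae : ∀ᵐ x ∂(volume.restrict (Set.Ioo (-R) R)),
          (iteratedDeriv j (Tint m n φ f) x) ^ 2
            = (iteratedDeriv j (fun z => z ^ (n + 1 - m) * Aop n (fun y => φ y * f y) z) x) ^ 2 := by
        have h0 : ∀ᵐ x : ℝ ∂volume, x ≠ (0:ℝ) := by
          have : (volume : Measure ℝ) {(0:ℝ)} = 0 := measure_singleton 0
          rw [ae_iff]
          simpa using this
        have h0' : ∀ᵐ x : ℝ ∂(volume.restrict (Set.Ioo (-R) R)), x ≠ (0:ℝ) :=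
          h0.filter_mono (ae_mono Measure.restrict_le_self)
        filter_upwards [h0'] with x hx
        rw [hID x hx]
      have hcongr : ∫ x in Set.Ioo (-R) R, (iteratedDeriv j (Tint m n φ f) x) ^ 2
          = ∫ x in Set.Ioo (-R) R,
            (iteratedDeriv j (fun z => z ^ (n + 1 - m) * Aop n (fun y => φ y * f y) z) x) ^ 2 :=
        integral_congr_ae hae
      -- the L² bound
      have hSint : ∀ c ∈ Finset.range (k + 1), IntegrableOn
          (fun x => (Bop (iteratedDeriv c f) x) ^ 2) (Set.Ioo (-R) R) volume := fun c _ =>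
        (((Bop_continuous (hfc c)).pow 2).integrableOn_Icc (a := -R) (b := R)).mono_set
          Set.Ioo_subset_Icc_self
      have hmono : ∫ x in Set.Ioo (-R) R,
          (iteratedDeriv j (fun z => z ^ (n + 1 - m) * Aop n (fun y => φ y * f y) z) x) ^ 2
          ≤ ∫ x in Set.Ioo (-R) R, (D ^ 2 * ((k : ℝ) + 1)) *
            ∑ c ∈ Finset.range (k + 1), (Bop (iteratedDeriv c f) x) ^ 2 := by
        refine integral_mono_of_nonneg (Filter.Eventually.of_forall fun x => sq_nonneg _) ?_ ?_
        · refine Integrable.const_mul ?_ _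
          exact integrable_finset_sum _ hSint
        · rw [Filter.EventuallyLE, ae_restrict_iff' measurableSet_Ioo]
          filter_upwards with x hx
          have hxI : x ∈ Set.Icc (-R) R := Set.Ioo_subset_Icc_self hx
          have h1 := hDb f hf j hjk x hxI
          have h2 : (iteratedDeriv j
              (fun z => z ^ (n + 1 - m) * Aop n (fun y => φ y * f y) z) x) ^ 2
              ≤ (D * ∑ c ∈ Finset.range (k + 1), Bop (iteratedDeriv c f) x) ^ 2 := by
            rw [← sq_abs]
            exact pow_le_pow_left₀ (abs_nonneg _) h1 2
          refine h2.trans ?_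
          rw [mul_pow]
          have h3 := sq_sum_le_card_mul_sum_sq (s := Finset.range (k + 1))
            (f := fun c => Bop (iteratedDeriv c f) x)
          rw [Finset.card_range] at h3
          have h3' : (∑ c ∈ Finset.range (k + 1), Bop (iteratedDeriv c f) x) ^ 2
              ≤ ((k : ℝ) + 1) * ∑ c ∈ Finset.range (k + 1), (Bop (iteratedDeriv c f) x) ^ 2 := by
            exact_mod_cast h3
          calc D ^ 2 * (∑ c ∈ Finset.range (k + 1), Bop (iteratedDeriv c f) x) ^ 2
              ≤ D ^ 2 * (((k : ℝ) + 1) *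
                ∑ c ∈ Finset.range (k + 1), (Bop (iteratedDeriv c f) x) ^ 2) :=
                mul_le_mul_of_nonneg_left h3' (sq_nonneg D)
            _ = D ^ 2 * ((k : ℝ) + 1) *
                ∑ c ∈ Finset.range (k + 1), (Bop (iteratedDeriv c f) x) ^ 2 := by ring
      have heval : ∫ x in Set.Ioo (-R) R, (D ^ 2 * ((k : ℝ) + 1)) *
            ∑ c ∈ Finset.range (k + 1), (Bop (iteratedDeriv c f) x) ^ 2
          = (D ^ 2 * ((k : ℝ) + 1)) * ∑ c ∈ Finset.range (k + 1),
              ∫ x in Set.Ioo (-R) R, (Bop (iteratedDeriv c f) x) ^ 2 := by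
        rw [MeasureTheory.integral_const_mul, integral_finset_sum _ hSint]
      have hsum : ∑ c ∈ Finset.range (k + 1),
            ∫ x in Set.Ioo (-R) R, (Bop (iteratedDeriv c f) x) ^ 2
          ≤ ∑ c ∈ Finset.range (k + 1), 4 * Ic c :=
        Finset.sum_le_sum fun c _ => Bop_L2 hR (hfc c)
      have htot : ∫ x in Set.Ioo (-R) R, (iteratedDeriv j (Tint m n φ f) x) ^ 2
          ≤ E * ∑ c ∈ Finset.range (k + 1), Ic c := by
        rw [hcongr, hE]
        refine (hmono.trans_eq heval).trans ?_
        calc D ^ 2 * ((k:ℝ) + 1) * ∑ c ∈ Finset.range (k + 1),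
              ∫ x in Set.Ioo (-R) R, (Bop (iteratedDeriv c f) x) ^ 2
            ≤ D ^ 2 * ((k:ℝ) + 1) * ∑ c ∈ Finset.range (k + 1), 4 * Ic c :=
              mul_le_mul_of_nonneg_left hsum (by positivity)
          _ = 4 * (D ^ 2 * ((k:ℝ) + 1)) * ∑ c ∈ Finset.range (k + 1), Ic c := by
              rw [← Finset.mul_sum]; ring
      calc Real.sqrt (∫ x in Set.Ioo (-R) R, (iteratedDeriv j (Tint m n φ f) x) ^ 2)
          ≤ Real.sqrt (E * ∑ c ∈ Finset.range (k + 1), Ic c) := Real.sqrt_le_sqrt htot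
        _ = Real.sqrt E * Real.sqrt (∑ c ∈ Finset.range (k + 1), Ic c) := Real.sqrt_mul hE0 _
        _ ≤ Real.sqrt E * ∑ c ∈ Finset.range (k + 1), Real.sqrt (Ic c) := by
            apply mul_le_mul_of_nonneg_left (sqrt_sum_le _ _ hIc0) (Real.sqrt_nonneg E)
        _ = Real.sqrt E * sob1 R k f := by rw [hsob]
    have hfinal : sob1 R k (Tint m n φ f)
        ≤ ∑ _j ∈ Finset.range (k + 1), Real.sqrt E * sob1 R k f :=
      Finset.sum_le_sum key
    rw [Finset.sum_const, Finset.card_range, nsmul_eq_mul] at hfinal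
    push_cast at hfinal
    refine hfinal.trans ?_
    nlinarith [Real.sqrt_nonneg E, hsob_nonneg]
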